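/- Fuchs–van de Graaf inequality: for PSD matrices ρ, σ ∈ ℝ^{M×M} with Tr ρ = Tr σ = 1, we have ‖ρ − σ‖_* ≤ 2√(1 − ℱ(ρ,σ)²). -/

import Mathlib

open Matrix

lemma real_conjTranspose_eq {m n : ℕ} (A : Matrix (Fin m) (Fin n) ℝ) : Aᴴ = Aᵀ := rfl

lemma psd_tmul {m n : ℕ} (A : Matrix (Fin m) (Fin n) ℝ) : (Aᵀ * A).PosSemidef := by
  have h := Matrix.posSemidef_conjTranspose_mul_self A
  rwa [real_conjTranspose_eq] at h

lemma psd_gram {m n : ℕ} (A : Matrix (Fin m) (Fin n) ℝ) : (A * Aᵀ).PosSemidef := by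
  have h := Matrix.posSemidef_self_mul_conjTranspose A
  rwa [real_conjTranspose_eq] at h

/-- The square root of a positive semidefinite matrix, as `Matrix.PosSemidef.sqrt` was defined
in the older Mathlib (removed since). -/
noncomputable def Matrix.PosSemidef.sqrt {n : Type*} [Fintype n] [DecidableEq n]
    {A : Matrix n n ℝ} (hA : A.PosSemidef) : Matrix n n ℝ :=
  hA.1.eigenvectorUnitary.1 * diagonal ((↑) ∘ (√·) ∘ hA.1.eigenvalues) *
    (star hA.1.eigenvectorUnitary : Matrix n n ℝ)

lemma Matrix.PosSemidef.posSemidef_sqrt {M : ℕ} {A : Matrix (Fin M) (Fin M) ℝ}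
    (hA : A.PosSemidef) : hA.sqrt.PosSemidef := by
  unfold Matrix.PosSemidef.sqrt
  have hd : (diagonal (((↑) : ℝ → ℝ) ∘ (√·) ∘ hA.1.eigenvalues)).PosSemidef := by
    rw [posSemidef_diagonal_iff]
    intro i
    simp [Real.sqrt_nonneg]
  exact hd.mul_mul_conjTranspose_same _

lemma psd_sand {M : ℕ} {Kx Ky : Matrix (Fin M) (Fin M) ℝ} (hx : Kx.PosSemidef) (hy : Ky.PosSemidef) :
    (hx.sqrt * Ky * hx.sqrt).PosSemidef := by
  have h := hy.mul_mul_conjTranspose_same hx.sqrt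
  rwa [hx.posSemidef_sqrt.isHermitian.eq] at h

/-- Nuclear norm: sum of singular values, i.e. `Tr[(AᵀA)^{1/2}]`. -/
noncomputable def nuclearNorm {m n : ℕ} (A : Matrix (Fin m) (Fin n) ℝ) : ℝ :=
  (Matrix.PosSemidef.sqrt (psd_tmul A)).trace

/-- Frobenius norm. -/
noncomputable def frobNorm {m n : ℕ} (A : Matrix (Fin m) (Fin n) ℝ) : ℝ :=
  Real.sqrt (Matrix.trace (Aᵀ * A))

/-- Fidelity `Tr[(Kx^{1/2} Ky Kx^{1/2})^{1/2}]` between PSD matrices. -/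
noncomputable def fidelity {M : ℕ} {Kx Ky : Matrix (Fin M) (Fin M) ℝ}
    (hx : Kx.PosSemidef) (hy : Ky.PosSemidef) : ℝ :=
  (Matrix.PosSemidef.sqrt (psd_sand hx hy)).trace

open scoped MatrixOrder in
lemma fvdg_sqrt_eq_cfc {M : ℕ} {A : Matrix (Fin M) (Fin M) ℝ} (hA : A.PosSemidef) :
    hA.sqrt = CFC.sqrt A := by
  rw [CFC.sqrt_eq_cfc, cfc_nnreal_eq_real _ A hA.nonneg, hA.1.cfc_eq]
  simp only [Matrix.IsHermitian.cfc, Matrix.PosSemidef.sqrt, Unitary.conjStarAlgAut_apply]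
  congr 3
  funext i
  simp [Real.coe_sqrt, hA.eigenvalues_nonneg i]

open scoped MatrixOrder in
lemma Matrix.PosSemidef.sqrt_mul_self {M : ℕ} {A : Matrix (Fin M) (Fin M) ℝ}
    (hA : A.PosSemidef) : hA.sqrt * hA.sqrt = A := by
  rw [fvdg_sqrt_eq_cfc]; exact CFC.sqrt_mul_sqrt_self A hA.nonneg

open scoped MatrixOrder in
lemma Matrix.PosSemidef.eq_sqrt_of_sq_eq {M : ℕ} {A B : Matrix (Fin M) (Fin M) ℝ}
    (hA : A.PosSemidef) (hB : B.PosSemidef) (h : A ^ 2 = B) : A = hB.sqrt := by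
  rw [fvdg_sqrt_eq_cfc]; exact (CFC.sqrt_unique (by rw [← sq]; exact h) hA.nonneg).symm

variable {M : ℕ}

lemma fvdg_entry_dot (A B : Matrix (Fin M) (Fin M) ℝ) (i j : Fin M) :
    (Aᵀ * B) i j = (fun a => A a i) ⬝ᵥ (fun a => B a j) := by
  simp [Matrix.mul_apply, dotProduct]

lemma fvdg_polar (C : Matrix (Fin M) (Fin M) ℝ) :
    ∃ V : Matrix (Fin M) (Fin M) ℝ, Vᵀ * V = 1 ∧ V * Vᵀ = 1 ∧
      Matrix.trace (Cᵀ * V) = nuclearNorm C := by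
  classical
  have hG : (Cᵀ * C).PosSemidef := psd_tmul C
  have hH : (Cᵀ * C).IsHermitian := hG.1
  have hG' : (C * Cᵀ).PosSemidef := psd_gram C
  have hH' : (C * Cᵀ).IsHermitian := hG'.1
  set lam : Fin M → ℝ := hH.eigenvalues with hlam
  set lam' : Fin M → ℝ := hH'.eigenvalues with hlam'
  set W : Matrix (Fin M) (Fin M) ℝ := (hH.eigenvectorUnitary : Matrix (Fin M) (Fin M) ℝ) with hWdef
  set W' : Matrix (Fin M) (Fin M) ℝ := (hH'.eigenvectorUnitary : Matrix (Fin M) (Fin M) ℝ) with hW'def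
  have hW1 : Wᵀ * W = 1 := by
    have := Matrix.mem_unitaryGroup_iff'.mp (Matrix.IsHermitian.eigenvectorUnitary hH).2
    simpa [Matrix.star_eq_conjTranspose, real_conjTranspose_eq] using this
  have hW2 : W * Wᵀ = 1 := mul_eq_one_comm.mp hW1
  have hW'1 : W'ᵀ * W' = 1 := by
    have := Matrix.mem_unitaryGroup_iff'.mp (Matrix.IsHermitian.eigenvectorUnitary hH').2
    simpa [Matrix.star_eq_conjTranspose, real_conjTranspose_eq] using this
  have hW'2 : W' * W'ᵀ = 1 := mul_eq_one_comm.mp hW'1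
  have hspec : Cᵀ * C = W * Matrix.diagonal lam * Wᵀ := by
    have := hH.spectral_theorem
    simpa [Matrix.star_eq_conjTranspose, real_conjTranspose_eq,
      RCLike.ofReal_real_eq_id, Function.id_comp] using this
  have hspec' : C * Cᵀ = W' * Matrix.diagonal lam' * W'ᵀ := by
    have := hH'.spectral_theorem
    simpa [Matrix.star_eq_conjTranspose, real_conjTranspose_eq,
      RCLike.ofReal_real_eq_id, Function.id_comp] using this
  have hlam_nonneg : ∀ i, 0 ≤ lam i := fun i => hG.eigenvalues_nonneg i
  -- diagonalization identities
  have hA1 : (C * W)ᵀ * (C * W) = Matrix.diagonal lam := by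
    rw [Matrix.transpose_mul]
    calc Wᵀ * Cᵀ * (C * W) = Wᵀ * (Cᵀ * C) * W := by
          rw [Matrix.mul_assoc, Matrix.mul_assoc, Matrix.mul_assoc]
      _ = (Wᵀ * W) * Matrix.diagonal lam * (Wᵀ * W) := by
          rw [hspec]; simp only [Matrix.mul_assoc]
      _ = Matrix.diagonal lam := by rw [hW1]; simp
  have hA1' : (W'ᵀ * C) * (W'ᵀ * C)ᵀ = Matrix.diagonal lam' := by
    rw [Matrix.transpose_mul, Matrix.transpose_transpose]
    calc W'ᵀ * C * (Cᵀ * W') = W'ᵀ * (C * Cᵀ) * W' := by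
          rw [Matrix.mul_assoc, Matrix.mul_assoc, Matrix.mul_assoc]
      _ = (W'ᵀ * W') * Matrix.diagonal lam' * (W'ᵀ * W') := by
          rw [hspec']; simp only [Matrix.mul_assoc]
      _ = Matrix.diagonal lam' := by rw [hW'1]; simp
  -- rows of W'ᵀ * C corresponding to zero eigenvalues vanish
  have hrow : ∀ k : Fin M, lam' k = 0 → ∀ a, (W'ᵀ * C) k a = 0 := by
    intro k hk a
    set A := W'ᵀ * C with hAdef
    have hsum : ∑ b, A k b * A k b = 0 := by
      have h := congrArg (fun X => X k k) hA1'
      simpa [Matrix.mul_apply, hk] using h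
    have h0 : ∀ b ∈ Finset.univ, (0:ℝ) ≤ ((W'ᵀ * C) k b) * ((W'ᵀ * C) k b) :=
      fun b _ => mul_self_nonneg _
    have := (Finset.sum_eq_zero_iff_of_nonneg h0).mp hsum a (Finset.mem_univ a)
    exact mul_self_eq_zero.mp this
  -- cardinality of zero eigenvalue sets
  have hcard : Fintype.card {i // lam i = 0} = Fintype.card {j // lam' j = 0} := by
    have c1 : Fintype.card {i // lam i ≠ 0} = (Cᵀ * C).rank :=
      (hH.rank_eq_card_non_zero_eigs).symm
    have c2 : Fintype.card {j // lam' j ≠ 0} = (C * Cᵀ).rank :=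
      (hH'.rank_eq_card_non_zero_eigs).symm
    have e1 : Fintype.card {i // lam i = 0} = M - Fintype.card {i // lam i ≠ 0} := by
      rw [show Fintype.card {i // lam i = 0}
            = Fintype.card {i : Fin M // ¬ (lam i ≠ 0)} from
          Fintype.card_congr (Equiv.subtypeEquivRight fun x => by simp),
        Fintype.card_subtype_compl, Fintype.card_fin]
    have e2 : Fintype.card {j // lam' j = 0} = M - Fintype.card {j // lam' j ≠ 0} := by
      rw [show Fintype.card {j // lam' j = 0}
            = Fintype.card {j : Fin M // ¬ (lam' j ≠ 0)} from
          Fintype.card_congr (Equiv.subtypeEquivRight fun x => by simp),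
        Fintype.card_subtype_compl, Fintype.card_fin]
    rw [e1, e2, c1, c2, Matrix.rank_transpose_mul_self, Matrix.rank_self_mul_transpose]
  let e : {i // lam i = 0} ≃ {j // lam' j = 0} := Fintype.equivOfCardEq hcard
  -- the orthonormal columns
  let u : Fin M → Fin M → ℝ := fun i =>
    if h : lam i = 0 then (fun a => W' a (e ⟨i, h⟩))
    else (Real.sqrt (lam i))⁻¹ • (fun a => (C * W) a i)
  let Y : Matrix (Fin M) (Fin M) ℝ := Matrix.of fun a i => u i a
  have hYdot : ∀ i j, (Yᵀ * Y) i j = u i ⬝ᵥ u j := by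
    intro i j
    simp [Y, Matrix.mul_apply, dotProduct]
  -- cross-term vanishes
  have hcross : ∀ (k : Fin M) (h : lam' k = 0) (j : Fin M),
      (fun a => W' a k) ⬝ᵥ (fun a => (C * W) a j) = 0 := by
    intro k hk j
    rw [← fvdg_entry_dot]
    have : W'ᵀ * (C * W) = (W'ᵀ * C) * W := by rw [Matrix.mul_assoc]
    rw [this, Matrix.mul_apply]
    exact Finset.sum_eq_zero fun b _ => by rw [hrow k hk b, zero_mul]
  have hYY : Yᵀ * Y = 1 := by
    ext i j
    rw [hYdot, Matrix.one_apply]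
    by_cases hi : lam i = 0 <;> by_cases hj : lam j = 0
    · -- both zero
      simp only [u, dif_pos hi, dif_pos hj]
      rw [← fvdg_entry_dot, hW'1, Matrix.one_apply]
      by_cases hij : i = j
      · subst hij; simp
      · rw [if_neg (fun h => hij (Subtype.ext_iff.mp (e.injective (Subtype.ext h)))),
          if_neg hij]
    · -- i zero, j nonzero
      simp only [u, dif_pos hi, dif_neg hj]
      rw [dotProduct_smul, hcross _ (e ⟨i, hi⟩).2 j, smul_zero]
      rw [if_neg (show i ≠ j from fun h => hj (by rw [← h]; exact hi))]
    · -- i nonzero, j zero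
      simp only [u, dif_neg hi, dif_pos hj]
      rw [dotProduct_comm, dotProduct_smul, hcross _ (e ⟨j, hj⟩).2 i,
        smul_zero]
      rw [if_neg (show i ≠ j from fun h => hi (by rw [h]; exact hj))]
    · -- both nonzero
      simp only [u, dif_neg hi, dif_neg hj]
      rw [smul_dotProduct, dotProduct_smul, ← fvdg_entry_dot, hA1,
        Matrix.diagonal_apply]
      by_cases hij : i = j
      · subst hij
        rw [if_pos rfl, if_pos rfl, smul_eq_mul, smul_eq_mul,
          ← Real.mul_self_sqrt (hlam_nonneg i)]
        have hs : Real.sqrt (lam i) ≠ 0 :=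
          fun h => hi (by rw [← Real.mul_self_sqrt (hlam_nonneg i), h, mul_zero])
        field_simp
        rw [Real.sqrt_sq (Real.sqrt_nonneg _)]
      · rw [if_neg hij, if_neg hij, smul_eq_mul, smul_eq_mul, mul_zero, mul_zero]
  let V : Matrix (Fin M) (Fin M) ℝ := Y * Wᵀ
  have hV1 : Vᵀ * V = 1 := by
    show (Y * Wᵀ)ᵀ * (Y * Wᵀ) = 1
    rw [Matrix.transpose_mul, Matrix.transpose_transpose]
    calc W * Yᵀ * (Y * Wᵀ) = W * (Yᵀ * Y) * Wᵀ := by simp only [Matrix.mul_assoc]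
      _ = 1 := by rw [hYY, Matrix.mul_one, hW2]
  -- trace computation
  have htrace : Matrix.trace (Cᵀ * V) = ∑ i, Real.sqrt (lam i) := by
    have h1 : Matrix.trace (Cᵀ * V) = Matrix.trace ((C * W)ᵀ * Y) := by
      show Matrix.trace (Cᵀ * (Y * Wᵀ)) = _
      rw [← Matrix.mul_assoc, Matrix.trace_mul_comm, Matrix.transpose_mul,
        ← Matrix.mul_assoc]
    rw [h1, Matrix.trace]
    apply Finset.sum_congr rfl
    intro i _
    have h2 : ((C * W)ᵀ * Y).diag i = (fun a => (C * W) a i) ⬝ᵥ u i := by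
      simp [Matrix.diag, Y, Matrix.mul_apply, dotProduct, mul_comm]
    rw [h2]
    by_cases hi : lam i = 0
    · simp only [u, dif_pos hi]
      rw [dotProduct_comm, hcross _ (e ⟨i, hi⟩).2 i, hi, Real.sqrt_zero]
    · simp only [u, dif_neg hi]
      rw [dotProduct_smul, ← fvdg_entry_dot, hA1, Matrix.diagonal_apply,
        if_pos rfl, smul_eq_mul]
      rw [← Real.mul_self_sqrt (hlam_nonneg i)]
      have hs : Real.sqrt (lam i) ≠ 0 :=
        fun h => hi (by rw [← Real.mul_self_sqrt (hlam_nonneg i), h, mul_zero])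
      field_simp
      rw [Real.sqrt_sq (Real.sqrt_nonneg _)]
  -- nuclear norm = sum of sqrt eigenvalues
  have hnn : nuclearNorm C = ∑ i, Real.sqrt (lam i) := by
    have hD : (Matrix.diagonal fun i => Real.sqrt (lam i)).PosSemidef :=
      Matrix.posSemidef_diagonal_iff.mpr fun i => Real.sqrt_nonneg _
    have hR : (W * Matrix.diagonal (fun i => Real.sqrt (lam i)) * Wᵀ).PosSemidef := by
      have := hD.mul_mul_conjTranspose_same W
      rwa [real_conjTranspose_eq] at this
    have hsq : (W * Matrix.diagonal (fun i => Real.sqrt (lam i)) * Wᵀ) ^ 2 = Cᵀ * C := by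
      rw [pow_two, hspec]
      calc W * Matrix.diagonal (fun i => Real.sqrt (lam i)) * Wᵀ *
            (W * Matrix.diagonal (fun i => Real.sqrt (lam i)) * Wᵀ)
          = W * (Matrix.diagonal (fun i => Real.sqrt (lam i)) * (Wᵀ * W) *
            Matrix.diagonal (fun i => Real.sqrt (lam i))) * Wᵀ := by
            simp only [Matrix.mul_assoc]
        _ = W * Matrix.diagonal lam * Wᵀ := by
            rw [hW1, Matrix.mul_one, Matrix.diagonal_mul_diagonal,
              show (fun i => Real.sqrt (lam i) * Real.sqrt (lam i)) = lam from
                funext fun i => Real.mul_self_sqrt (hlam_nonneg i)]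
    have heq := hR.eq_sqrt_of_sq_eq (psd_tmul C) hsq
    rw [nuclearNorm, ← heq, Matrix.trace_mul_comm, ← Matrix.mul_assoc, hW1, Matrix.one_mul,
      Matrix.trace_diagonal]
  exact ⟨V, hV1, mul_eq_one_comm.mp hV1, by rw [htrace, hnn]⟩

lemma fvdg_trace_eq_sum_prod (X Y : Matrix (Fin M) (Fin M) ℝ) :
    Matrix.trace (Xᵀ * Y) = ∑ p : Fin M × Fin M, X p.1 p.2 * Y p.1 p.2 := by
  rw [Matrix.trace, Fintype.sum_prod_type]
  simp only [Matrix.diag, Matrix.mul_apply, Matrix.transpose_apply]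
  exact Finset.sum_comm

lemma fvdg_trace_tmul_nonneg (X : Matrix (Fin M) (Fin M) ℝ) :
    0 ≤ Matrix.trace (Xᵀ * X) := by
  rw [fvdg_trace_eq_sum_prod]
  exact Finset.sum_nonneg fun p _ => mul_self_nonneg _

lemma fvdg_trace_CS (X Y : Matrix (Fin M) (Fin M) ℝ) :
    Matrix.trace (Xᵀ * Y) ≤
      Real.sqrt (Matrix.trace (Xᵀ * X)) * Real.sqrt (Matrix.trace (Yᵀ * Y)) := by
  rw [fvdg_trace_eq_sum_prod, fvdg_trace_eq_sum_prod, fvdg_trace_eq_sum_prod]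
  have h := Real.sum_mul_le_sqrt_mul_sqrt Finset.univ
    (fun p : Fin M × Fin M => X p.1 p.2) (fun p : Fin M × Fin M => Y p.1 p.2)
  simpa [sq] using h

lemma fvdg_psd_trace_nonneg {A : Matrix (Fin M) (Fin M) ℝ} (hA : A.PosSemidef) :
    0 ≤ Matrix.trace A := by
  rw [Matrix.trace]
  refine Finset.sum_nonneg fun i _ => ?_
  exact hA.diag_nonneg

lemma fvdg_sqrt_trace_congr {A B : Matrix (Fin M) (Fin M) ℝ} (hA : A.PosSemidef)
    (hB : B.PosSemidef) (h : A = B) : hA.sqrt.trace = hB.sqrt.trace := by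
  subst h; rfl


theorem fuchs_van_de_graaf (M : ℕ) (ρ σ : Matrix (Fin M) (Fin M) ℝ)
    (hρ : ρ.PosSemidef) (hσ : σ.PosSemidef)
    (hρ1 : Matrix.trace ρ = 1) (hσ1 : Matrix.trace σ = 1) :
    nuclearNorm (ρ - σ) ≤ 2 * Real.sqrt (1 - (fidelity hρ hσ) ^ 2) := by
  classical
  set P := hρ.sqrt with hPdef
  set Q := hσ.sqrt with hQdef
  have hPpsd : P.PosSemidef := hρ.posSemidef_sqrt
  have hQpsd : Q.PosSemidef := hσ.posSemidef_sqrt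
  have hPt : Pᵀ = P := by rw [← real_conjTranspose_eq]; exact hPpsd.1
  have hQt : Qᵀ = Q := by rw [← real_conjTranspose_eq]; exact hQpsd.1
  have hPP : P * P = ρ := hρ.sqrt_mul_self
  have hQQ : Q * Q = σ := hσ.sqrt_mul_self
  obtain ⟨V₀, hV01, hV02, hV0tr⟩ := fvdg_polar (Q * P)
  set t := Matrix.trace ((Q * P)ᵀ * V₀) with htdef
  -- fidelity = nuclearNorm (Q * P) = t
  have hF : fidelity hρ hσ = t := by
    rw [fidelity, hV0tr, nuclearNorm]
    have hmat : hρ.sqrt * σ * hρ.sqrt = (Q * P)ᵀ * (Q * P) := by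
      rw [← hPdef, Matrix.transpose_mul, hPt, hQt, ← hQQ]
      noncomm_ring
    exact fvdg_sqrt_trace_congr _ _ hmat
  have htnonneg : 0 ≤ t := by
    rw [hV0tr, nuclearNorm]
    exact fvdg_psd_trace_nonneg (Matrix.PosSemidef.posSemidef_sqrt _)
  -- rewrite t
  have htalt : (Q * P)ᵀ * V₀ = Pᵀ * (Q * V₀) := by
    rw [Matrix.transpose_mul, hQt, Matrix.mul_assoc]
  set B := Q * V₀ with hBdef
  have hBB : B * Bᵀ = σ := by
    rw [hBdef, Matrix.transpose_mul, hQt, Matrix.mul_assoc, ← Matrix.mul_assoc V₀, hV02,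
      Matrix.one_mul, hQQ]
  have hBtB : Matrix.trace (Bᵀ * B) = 1 := by
    rw [Matrix.trace_mul_comm, hBB, hσ1]
  have hPB : Matrix.trace (Pᵀ * B) = t := by rw [htdef, htalt]
  have hBP : Matrix.trace (Bᵀ * P) = t := by
    have h := Matrix.trace_transpose (Pᵀ * B)
    rw [Matrix.transpose_mul Pᵀ B, Matrix.transpose_transpose] at h
    rw [h, hPB]
  have ht1 : t ≤ 1 := by
    have h := fvdg_trace_CS P B
    rw [hPB, hPt, hPP, hρ1, hBtB, Real.sqrt_one, mul_one] at h
    exact h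
  have hPtP : Matrix.trace (Pᵀ * P) = 1 := by rw [hPt, hPP, hρ1]
  -- norms of P ± B
  have ha : Matrix.trace ((P - B)ᵀ * (P - B)) = 2 - 2 * t := by
    rw [Matrix.transpose_sub, Matrix.sub_mul, Matrix.mul_sub, Matrix.mul_sub,
      Matrix.trace_sub, Matrix.trace_sub, Matrix.trace_sub, hPtP, hPB, hBP, hBtB]
    ring
  have hb : Matrix.trace ((P + B)ᵀ * (P + B)) = 2 + 2 * t := by
    rw [Matrix.transpose_add, Matrix.add_mul, Matrix.mul_add, Matrix.mul_add,
      Matrix.trace_add, Matrix.trace_add, Matrix.trace_add, hPtP, hPB, hBP, hBtB]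
    ring
  have ha0 : (0:ℝ) ≤ 2 - 2 * t := ha ▸ fvdg_trace_tmul_nonneg (P - B)
  have hb0 : (0:ℝ) ≤ 2 + 2 * t := hb ▸ fvdg_trace_tmul_nonneg (P + B)
  -- the decomposition of ρ - σ
  obtain ⟨V₁, hV11, hV12, hV1tr⟩ := fvdg_polar (ρ - σ)
  have hρσt : (ρ - σ)ᵀ = ρ - σ := by
    rw [Matrix.transpose_sub, ← real_conjTranspose_eq ρ, ← real_conjTranspose_eq σ,
      hρ.1, hσ.1]
  have hexp : (P - B) * (P + B)ᵀ + (P + B) * (P - B)ᵀ = (ρ - σ) + (ρ - σ) := by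
    rw [Matrix.transpose_add, Matrix.transpose_sub, hPt, ← hPP, ← hBB]
    noncomm_ring
  -- bound the two trace terms
  have hterm1 : Matrix.trace ((P - B) * (P + B)ᵀ * V₁) ≤
      Real.sqrt (2 + 2 * t) * Real.sqrt (2 - 2 * t) := by
    rw [Matrix.mul_assoc, Matrix.trace_mul_comm, Matrix.mul_assoc]
    have h := fvdg_trace_CS (P + B) (V₁ * (P - B))
    have h2 : Matrix.trace ((V₁ * (P - B))ᵀ * (V₁ * (P - B)))
        = Matrix.trace ((P - B)ᵀ * (P - B)) := by
      rw [Matrix.transpose_mul, Matrix.mul_assoc, ← Matrix.mul_assoc V₁ᵀ, hV11,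
        Matrix.one_mul]
    rw [h2, ha, hb] at h
    exact h
  have hterm2 : Matrix.trace ((P + B) * (P - B)ᵀ * V₁) ≤
      Real.sqrt (2 - 2 * t) * Real.sqrt (2 + 2 * t) := by
    rw [Matrix.mul_assoc, Matrix.trace_mul_comm, Matrix.mul_assoc]
    have h := fvdg_trace_CS (P - B) (V₁ * (P + B))
    have h2 : Matrix.trace ((V₁ * (P + B))ᵀ * (V₁ * (P + B)))
        = Matrix.trace ((P + B)ᵀ * (P + B)) := by
      rw [Matrix.transpose_mul, Matrix.mul_assoc, ← Matrix.mul_assoc V₁ᵀ, hV11,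
        Matrix.one_mul]
    rw [h2, ha, hb] at h
    exact h
  -- put it together
  have hmain : nuclearNorm (ρ - σ) ≤ Real.sqrt (2 - 2 * t) * Real.sqrt (2 + 2 * t) := by
    rw [← hV1tr, hρσt]
    have hsum : Matrix.trace ((ρ - σ) * V₁) + Matrix.trace ((ρ - σ) * V₁)
        = Matrix.trace ((P - B) * (P + B)ᵀ * V₁) + Matrix.trace ((P + B) * (P - B)ᵀ * V₁) := by
      rw [← Matrix.trace_add, ← Matrix.add_mul, ← hexp, Matrix.add_mul, Matrix.trace_add]
    nlinarith [hterm1, hterm2, hsum]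
  have hprod : Real.sqrt (2 - 2 * t) * Real.sqrt (2 + 2 * t)
      = 2 * Real.sqrt (1 - t ^ 2) := by
    rw [← Real.sqrt_mul ha0]
    rw [show (2 - 2 * t) * (2 + 2 * t) = 4 * (1 - t ^ 2) by ring,
      Real.sqrt_mul (by norm_num : (0:ℝ) ≤ 4),
      show Real.sqrt 4 = 2 by rw [show (4:ℝ) = 2 ^ 2 by norm_num, Real.sqrt_sq (by norm_num)]]
  rw [hF]
  calc nuclearNorm (ρ - σ) ≤ Real.sqrt (2 - 2 * t) * Real.sqrt (2 + 2 * t) := hmain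
    _ = 2 * Real.sqrt (1 - t ^ 2) := hprod
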